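/- Let $n, m, k$ be integers with $3 \le m \le n-1$ and $2 \le k \le m-1$. Let $(h_{pq})_{k+1 \le p,q \le n}$ be a symmetric array of real numbers (i.e. $h_{pq} = h_{qp}$ for all $p,q$) and set $H = \sum_{p=k+1}^n h_{pp}$. Then $$\sum_{p=k+1}^n \sum_{q=k+1}^n h_{pq}^2 \; - \; \left( \frac{1}{2} - \frac{1}{2(k-1)} \right) H^2 \; + \; \sum_{p=k+1}^m \sum_{q=p+1}^n \left( h_{pp} h_{qq} - h_{pq}^2 \right) \; \ge \; \frac{m^2 - 2 - n(m-2)}{2(m-1)(n-m)} \left( \sum_{q=m+1}^n h_{qq} \right)^2.$$ -/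

import Mathlib

lemma icc_add_one (a b : ℕ) : Finset.Icc (a + 1) b = Finset.Ioc a b := by
  ext x; simp [Finset.mem_Icc, Finset.mem_Ioc]

/-- Triangle decomposition of a double sum over `Ioc a b × Ioc a b`. -/
lemma tri (f : ℕ → ℕ → ℝ) (a b : ℕ) :
    ∑ p ∈ Finset.Ioc a b, ∑ q ∈ Finset.Ioc a b, f p q
      = ∑ p ∈ Finset.Ioc a b, f p p
        + ∑ p ∈ Finset.Ioc a b, ∑ q ∈ Finset.Ioc p b, (f p q + f q p) := by
  induction b with
  | zero => simp
  | succ b ih =>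
    rcases le_or_gt (b + 1) a with hb | hb
    · rw [Finset.Ioc_eq_empty (by omega : ¬a < b + 1)]
      simp
    · have hab : a ≤ b := by omega
      have e2 : ∀ p ∈ Finset.Ioc a b,
          (∑ q ∈ Finset.Ioc p (b + 1), (f p q + f q p))
            = (∑ q ∈ Finset.Ioc p b, (f p q + f q p)) + (f p (b + 1) + f (b + 1) p) :=
        fun p hp => Finset.sum_Ioc_succ_top (Finset.mem_Ioc.mp hp).2 _
      simp only [Finset.sum_Ioc_succ_top hab]
      rw [Finset.sum_congr rfl e2, Finset.Ioc_self, Finset.sum_empty]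
      simp only [Finset.sum_add_distrib]
      rw [ih]
      simp only [Finset.sum_add_distrib]
      ring

/-- The key real-number inequality. -/
lemma key (K M N A B SA SB : ℝ) (hK : 2 ≤ K) (hM : K + 1 ≤ M) (hN : M + 1 ≤ N)
    (h1 : A ^ 2 ≤ (M - K) * SA) (h2 : B ^ 2 ≤ (N - M) * SB) :
    (M ^ 2 - 2 - N * (M - 2)) / (2 * (M - 1) * (N - M)) * B ^ 2
      ≤ SA + SB - (1 / 2 - 1 / (2 * (K - 1))) * (A + B) ^ 2
        + ((A * A - SA) / 2 + A * B) := by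
  have hK1 : (0:ℝ) < K - 1 := by linarith
  have hM1 : (0:ℝ) < M - 1 := by linarith
  have hMK : (0:ℝ) < M - K := by linarith
  have hNM : (0:ℝ) < N - M := by linarith
  have hK1' : (K:ℝ) - 1 ≠ 0 := ne_of_gt hK1
  have hM1' : (M:ℝ) - 1 ≠ 0 := ne_of_gt hM1
  have hMK' : (M:ℝ) - K ≠ 0 := ne_of_gt hMK
  have hNM' : (N:ℝ) - M ≠ 0 := ne_of_gt hNM
  rw [← sub_nonneg]
  have hE : SA + SB - (1 / 2 - 1 / (2 * (K - 1))) * (A + B) ^ 2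
        + ((A * A - SA) / 2 + A * B)
      - (M ^ 2 - 2 - N * (M - 2)) / (2 * (M - 1) * (N - M)) * B ^ 2
      = ((K - 1) * (M - 1) * (N - M) * ((M - K) * SA - A ^ 2)
          + 2 * (K - 1) * (M - 1) * (M - K) * ((N - M) * SB - B ^ 2)
          + (N - M) * ((M - 1) * A + (M - K) * B) ^ 2)
        / (2 * (K - 1) * (M - 1) * (N - M) * (M - K)) := by
    field_simp
    ring
  rw [hE]
  apply div_nonneg
  · have t1 : (0:ℝ) ≤ (K - 1) * (M - 1) * (N - M) * ((M - K) * SA - A ^ 2) := by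
      apply mul_nonneg (by positivity) (by linarith)
    have t2 : (0:ℝ) ≤ 2 * (K - 1) * (M - 1) * (M - K) * ((N - M) * SB - B ^ 2) := by
      apply mul_nonneg (by positivity) (by linarith)
    have t3 : (0:ℝ) ≤ (N - M) * ((M - 1) * A + (M - K) * B) ^ 2 := by positivity
    linarith
  · positivity

/-- Extrinsic curvature terms on intermediate slices (algebraic content):
for a symmetric array `h` indexed by `k+1, …, n` with trace `H`. -/
theorem stmt_1 (n m k : ℕ) (hm : 3 ≤ m) (hmn : m ≤ n - 1) (hk : 2 ≤ k) (hkm : k ≤ m - 1)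
    (h : ℕ → ℕ → ℝ) (H : ℝ)
    (hsym : ∀ p ∈ Finset.Icc (k + 1) n, ∀ q ∈ Finset.Icc (k + 1) n, h p q = h q p)
    (hH : H = ∑ p ∈ Finset.Icc (k + 1) n, h p p) :
    ∑ p ∈ Finset.Icc (k + 1) n, ∑ q ∈ Finset.Icc (k + 1) n, (h p q) ^ 2
      - (1 / 2 - 1 / (2 * ((k : ℝ) - 1))) * H ^ 2
      + ∑ p ∈ Finset.Icc (k + 1) m, ∑ q ∈ Finset.Icc (p + 1) n, (h p p * h q q - (h p q) ^ 2)
    ≥ ((m : ℝ) ^ 2 - 2 - (n : ℝ) * ((m : ℝ) - 2)) / (2 * ((m : ℝ) - 1) * ((n : ℝ) - (m : ℝ)))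
        * (∑ q ∈ Finset.Icc (m + 1) n, h q q) ^ 2 := by
  have hkm' : k ≤ m := by omega
  have hmn' : m ≤ n := by omega
  have hkm1 : k + 1 ≤ m := by omega
  have hmn1 : m + 1 ≤ n := by omega
  simp only [icc_add_one] at hsym hH ⊢
  set A := ∑ p ∈ Finset.Ioc k m, h p p with hA
  set B := ∑ q ∈ Finset.Ioc m n, h q q with hB
  set SA := ∑ p ∈ Finset.Ioc k m, (h p p) ^ 2 with hSA
  set SB := ∑ q ∈ Finset.Ioc m n, (h q q) ^ 2 with hSB
  set T := ∑ p ∈ Finset.Ioc k m, ∑ q ∈ Finset.Ioc p n, (h p q) ^ 2 with hT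
  set W := ∑ p ∈ Finset.Ioc k m, ∑ q ∈ Finset.Ioc p m, h p p * h q q with hW
  set R := ∑ p ∈ Finset.Ioc k n, ∑ q ∈ Finset.Ioc p n, ((h p q) ^ 2 + (h q p) ^ 2) with hR
  -- trace decomposition
  have hHAB : H = A + B := by
    rw [hH, ← Finset.sum_Ioc_consecutive (fun p => h p p) hkm' hmn']
  -- diagonal decomposition
  have hD : ∑ p ∈ Finset.Ioc k n, (h p p) ^ 2 = SA + SB :=
    (Finset.sum_Ioc_consecutive (fun p => (h p p) ^ 2) hkm' hmn').symm
  -- full square sum decomposition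
  have hS : ∑ p ∈ Finset.Ioc k n, ∑ q ∈ Finset.Ioc k n, (h p q) ^ 2
      = (SA + SB) + R := by
    have := tri (fun p q => (h p q) ^ 2) k n
    rw [← hD]; exact this
  -- 2T ≤ R
  have hR2 : 2 * T ≤ R := by
    have step1 : 2 * T = ∑ p ∈ Finset.Ioc k m, ∑ q ∈ Finset.Ioc p n, ((h p q) ^ 2 + (h q p) ^ 2) := by
      rw [hT, Finset.mul_sum]
      refine Finset.sum_congr rfl fun p hp => ?_
      rw [Finset.mul_sum]
      refine Finset.sum_congr rfl fun q hq => ?_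
      have hp' := Finset.mem_Ioc.mp hp
      have hq' := Finset.mem_Ioc.mp hq
      have hpq := hsym p (Finset.mem_Ioc.mpr ⟨hp'.1, le_trans hp'.2 hmn'⟩)
        q (Finset.mem_Ioc.mpr ⟨lt_trans hp'.1 hq'.1, hq'.2⟩)
      rw [← hpq]; ring
    rw [step1, hR]
    apply Finset.sum_le_sum_of_subset_of_nonneg (Finset.Ioc_subset_Ioc_right hmn')
    intro i _ _
    positivity
  have hT0 : 0 ≤ T := by rw [hT]; positivity
  -- third sum decomposition
  have hT3 : ∑ p ∈ Finset.Ioc k m, ∑ q ∈ Finset.Ioc p n, (h p p * h q q - (h p q) ^ 2)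
      = (W + A * B) - T := by
    simp only [Finset.sum_sub_distrib]
    rw [← hT]
    congr 1
    have hsplit : ∀ p ∈ Finset.Ioc k m,
        (∑ q ∈ Finset.Ioc p n, h p p * h q q)
          = (∑ q ∈ Finset.Ioc p m, h p p * h q q) + h p p * B := by
      intro p hp
      rw [← Finset.sum_Ioc_consecutive (fun q => h p p * h q q) (Finset.mem_Ioc.mp hp).2 hmn',
        hB, Finset.mul_sum]
    rw [Finset.sum_congr rfl hsplit, Finset.sum_add_distrib, ← Finset.sum_mul, ← hA, ← hW]
  -- A * A = SA + 2 * W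
  have hAW : A * A = SA + 2 * W := by
    have htri := tri (fun p q => h p p * h q q) k m
    have hL : ∑ p ∈ Finset.Ioc k m, ∑ q ∈ Finset.Ioc k m, h p p * h q q = A * A := by
      rw [hA, Finset.sum_mul]
      exact Finset.sum_congr rfl fun p _ => by rw [Finset.mul_sum]
    have hdiag : ∑ p ∈ Finset.Ioc k m, h p p * h p p = SA :=
      Finset.sum_congr rfl fun p _ => (sq (h p p)).symm
    have h2W : ∑ p ∈ Finset.Ioc k m, ∑ q ∈ Finset.Ioc p m, (h p p * h q q + h q q * h p p)
        = 2 * W := by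
      rw [hW, Finset.mul_sum]
      refine Finset.sum_congr rfl fun p _ => ?_
      rw [Finset.mul_sum]
      exact Finset.sum_congr rfl fun q _ => by ring
    rw [← hL, htri, hdiag, h2W]
  -- Cauchy–Schwarz
  have hCA : A ^ 2 ≤ ((m:ℝ) - k) * SA := by
    have hcs := sq_sum_le_card_mul_sum_sq (s := Finset.Ioc k m) (f := fun p => h p p)
    rw [Nat.card_Ioc] at hcs
    calc A ^ 2 ≤ ((m - k : ℕ) : ℝ) * SA := hcs
      _ = ((m:ℝ) - k) * SA := by rw [Nat.cast_sub hkm']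
  have hCB : B ^ 2 ≤ ((n:ℝ) - m) * SB := by
    have hcs := sq_sum_le_card_mul_sum_sq (s := Finset.Ioc m n) (f := fun q => h q q)
    rw [Nat.card_Ioc] at hcs
    calc B ^ 2 ≤ ((n - m : ℕ) : ℝ) * SB := hcs
      _ = ((n:ℝ) - m) * SB := by rw [Nat.cast_sub hmn']
  have hkey := key (k:ℝ) (m:ℝ) (n:ℝ) A B SA SB
    (by exact_mod_cast hk) (by exact_mod_cast hkm1) (by exact_mod_cast hmn1) hCA hCB
  rw [hHAB, hS, hT3]
  linarith [hkey, hR2, hT0, hAW]
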